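/- arXiv:1809.05308 — 3 statements merged into one kernel-verified Lean document; each statement's English description precedes it below -/
import Mathlib

section
/- Let P ∈ 𝒮⁺(H) be such that ∑_{j=1}^∞ ⟨P C_j x, C_j x⟩ < ∞ for every x ∈ H. Then for each x ∈ H the partial sums ∑_{j=1}^N D_j* P C_j x converge in U as N → ∞, and the limit ∑_{j=1}^∞ D_j* P C_j x satisfies, with C := (c‖P‖)^{1/2}, the estimate |∑_{j=1}^∞ D_j* P C_j x|_U ≤ C (∑_{j=1}^∞ ⟨P C_j x, C_j x⟩)^{1/2} for all x ∈ H. -/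
open scoped RealInnerProductSpace
open Filter

/-- Cauchy–Schwarz for a positive self-adjoint operator. -/
lemma cs_pos {H : Type*} [NormedAddCommGroup H] [InnerProductSpace ℝ H] [CompleteSpace H]
    (P : H →L[ℝ] H) (hPsa : IsSelfAdjoint P) (hPpos : ∀ x : H, 0 ≤ ⟪P x, x⟫)
    (u w : H) : ⟪P u, w⟫ ≤ Real.sqrt ⟪P u, u⟫ * Real.sqrt ⟪P w, w⟫ := by
  have hsym : ∀ a b : H, ⟪P a, b⟫ = ⟪P b, a⟫ := by
    intro a b
    calc ⟪P a, b⟫ = ⟪a, P b⟫ :=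
          (ContinuousLinearMap.isSelfAdjoint_iff_isSymmetric.mp hPsa) a b
      _ = ⟪P b, a⟫ := (real_inner_comm a (P b)).symm
  have hq : ∀ t : ℝ, 0 ≤ ⟪P w, w⟫ * (t * t) + (2 * ⟪P u, w⟫) * t + ⟪P u, u⟫ := by
    intro t
    have := hPpos (u + t • w)
    have hexp : ⟪P (u + t • w), u + t • w⟫
        = ⟪P w, w⟫ * (t * t) + (2 * ⟪P u, w⟫) * t + ⟪P u, u⟫ := by
      simp only [map_add, map_smul, inner_add_left, inner_add_right,
        real_inner_smul_left, real_inner_smul_right, ContinuousLinearMap.coe_smul',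
        Pi.smul_apply, smul_eq_mul]
      linear_combination t * hsym w u
    linarith [hexp ▸ this]
  have hd := discrim_le_zero hq
  rw [discrim] at hd
  have h2 : ⟪P u, w⟫ ^ 2 ≤ ⟪P u, u⟫ * ⟪P w, w⟫ := by nlinarith
  calc ⟪P u, w⟫ ≤ |⟪P u, w⟫| := le_abs_self _
    _ = Real.sqrt (⟪P u, w⟫ ^ 2) := (Real.sqrt_sq_eq_abs _).symm
    _ ≤ Real.sqrt (⟪P u, u⟫ * ⟪P w, w⟫) := Real.sqrt_le_sqrt h2
    _ = Real.sqrt ⟪P u, u⟫ * Real.sqrt ⟪P w, w⟫ := Real.sqrt_mul (hPpos u) _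

/-- If `P ∈ 𝒮⁺(H)` is such that `∑_j ⟨P C_j x, C_j x⟩ < ∞` for every `x ∈ H`,
then for each `x` the partial sums `∑_{j<N} D_j* P C_j x` converge in `U`, and the limit `L`
satisfies `‖L‖ ≤ (c‖P‖)^{1/2} (∑_j ⟨P C_j x, C_j x⟩)^{1/2}`. -/
theorem stmt0
    {H U : Type*}
    [NormedAddCommGroup H] [InnerProductSpace ℝ H] [CompleteSpace H]
    [NormedAddCommGroup U] [InnerProductSpace ℝ U] [CompleteSpace U]
    (C : ℕ → H →L[ℝ] H) (D : ℕ → U →L[ℝ] H) (c : ℝ) (hc : 0 < c)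
    (hDsum : ∀ v : U, Summable fun j => ‖D j v‖ ^ 2)
    (hD : ∀ v : U, ∑' j, ‖D j v‖ ^ 2 ≤ c * ‖v‖ ^ 2)
    (P : H →L[ℝ] H) (hPsa : IsSelfAdjoint P)
    (hPpos : ∀ x : H, 0 ≤ ⟪P x, x⟫)
    (hPC : ∀ x : H, Summable fun j => ⟪P (C j x), C j x⟫) :
    ∀ x : H, ∃ L : U,
      Tendsto (fun N => ∑ j ∈ Finset.range N,
          (ContinuousLinearMap.adjoint (D j)) (P (C j x))) atTop (nhds L) ∧
      ‖L‖ ≤ Real.sqrt (c * ‖P‖) * Real.sqrt (∑' j, ⟪P (C j x), C j x⟫) := by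
  intro x
  set a : ℕ → U := fun j => (ContinuousLinearMap.adjoint (D j)) (P (C j x)) with ha
  set t : ℕ → ℝ := fun j => ⟪P (C j x), C j x⟫ with htdef
  have ht0 : ∀ j, 0 ≤ t j := fun j => hPpos (C j x)
  have hcP : 0 ≤ c * ‖P‖ := mul_nonneg hc.le (norm_nonneg _)
  -- Key finite estimate
  have key : ∀ F : Finset ℕ, ‖∑ j ∈ F, a j‖ ≤
      Real.sqrt (c * ‖P‖) * Real.sqrt (∑ j ∈ F, t j) := by
    intro F
    set y := ∑ j ∈ F, a j with hy
    have hinner : ∀ v : U, ⟪y, v⟫ ≤ Real.sqrt (c * ‖P‖) * Real.sqrt (∑ j ∈ F, t j) * ‖v‖ := by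
      intro v
      have h1 : ⟪y, v⟫ = ∑ j ∈ F, ⟪P (C j x), D j v⟫ := by
        rw [hy, sum_inner]
        exact Finset.sum_congr rfl fun j _ =>
          ContinuousLinearMap.adjoint_inner_left (D j) v (P (C j x))
      have h2 : ∀ j ∈ F, ⟪P (C j x), D j v⟫ ≤
          Real.sqrt (t j) * Real.sqrt ⟪P (D j v), D j v⟫ := fun j _ =>
        cs_pos P hPsa hPpos (C j x) (D j v)
      have h3 : ∑ j ∈ F, Real.sqrt (t j) * Real.sqrt ⟪P (D j v), D j v⟫ ≤
          Real.sqrt (∑ j ∈ F, t j) * Real.sqrt (∑ j ∈ F, ⟪P (D j v), D j v⟫) :=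
        Real.sum_sqrt_mul_sqrt_le F ht0 (fun j => hPpos (D j v))
      have h4 : ∑ j ∈ F, ⟪P (D j v), D j v⟫ ≤ c * ‖P‖ * ‖v‖ ^ 2 := by
        have hb : ∀ j ∈ F, ⟪P (D j v), D j v⟫ ≤ ‖P‖ * ‖D j v‖ ^ 2 := by
          intro j _
          calc ⟪P (D j v), D j v⟫ ≤ ‖P (D j v)‖ * ‖D j v‖ := real_inner_le_norm _ _
            _ ≤ ‖P‖ * ‖D j v‖ * ‖D j v‖ :=
              mul_le_mul_of_nonneg_right (P.le_opNorm _) (norm_nonneg _)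
            _ = ‖P‖ * ‖D j v‖ ^ 2 := by ring
        calc ∑ j ∈ F, ⟪P (D j v), D j v⟫ ≤ ∑ j ∈ F, ‖P‖ * ‖D j v‖ ^ 2 :=
              Finset.sum_le_sum hb
          _ = ‖P‖ * ∑ j ∈ F, ‖D j v‖ ^ 2 := by rw [Finset.mul_sum]
          _ ≤ ‖P‖ * ∑' j, ‖D j v‖ ^ 2 := by
              apply mul_le_mul_of_nonneg_left _ (norm_nonneg P)
              exact Summable.sum_le_tsum F (fun j _ => by positivity) (hDsum v)
          _ ≤ ‖P‖ * (c * ‖v‖ ^ 2) :=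
              mul_le_mul_of_nonneg_left (hD v) (norm_nonneg P)
          _ = c * ‖P‖ * ‖v‖ ^ 2 := by ring
      calc ⟪y, v⟫ = ∑ j ∈ F, ⟪P (C j x), D j v⟫ := h1
        _ ≤ ∑ j ∈ F, Real.sqrt (t j) * Real.sqrt ⟪P (D j v), D j v⟫ :=
            Finset.sum_le_sum h2
        _ ≤ Real.sqrt (∑ j ∈ F, t j) * Real.sqrt (∑ j ∈ F, ⟪P (D j v), D j v⟫) := h3
        _ ≤ Real.sqrt (∑ j ∈ F, t j) * Real.sqrt (c * ‖P‖ * ‖v‖ ^ 2) := by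
            apply mul_le_mul_of_nonneg_left (Real.sqrt_le_sqrt h4) (Real.sqrt_nonneg _)
        _ = Real.sqrt (c * ‖P‖) * Real.sqrt (∑ j ∈ F, t j) * ‖v‖ := by
            rw [Real.sqrt_mul hcP, Real.sqrt_sq (norm_nonneg v)]; ring
    have := hinner y
    rw [real_inner_self_eq_norm_sq] at this
    rcases eq_or_lt_of_le (norm_nonneg y) with h | h
    · rw [← h]; positivity
    · nlinarith
  -- Summability of a
  have hsum_t : Summable t := hPC x
  have hsa : Summable a := by
    rw [summable_iff_vanishing_norm]
    intro ε hε
    have hε' : 0 < (ε / (Real.sqrt (c * ‖P‖) + 1)) ^ 2 := by positivity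
    obtain ⟨s, hs⟩ := summable_iff_vanishing_norm.mp hsum_t _ hε'
    refine ⟨s, fun F hF => ?_⟩
    have h1 := hs F hF
    have hFt : ∑ j ∈ F, t j < (ε / (Real.sqrt (c * ‖P‖) + 1)) ^ 2 :=
      (le_abs_self _).trans_lt (h1.trans_eq' (Real.norm_eq_abs _).symm)
    calc ‖∑ j ∈ F, a j‖ ≤ Real.sqrt (c * ‖P‖) * Real.sqrt (∑ j ∈ F, t j) := key F
      _ ≤ Real.sqrt (c * ‖P‖) * Real.sqrt ((ε / (Real.sqrt (c * ‖P‖) + 1)) ^ 2) :=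
          mul_le_mul_of_nonneg_left (Real.sqrt_le_sqrt hFt.le) (Real.sqrt_nonneg _)
      _ = Real.sqrt (c * ‖P‖) * (ε / (Real.sqrt (c * ‖P‖) + 1)) := by
          rw [Real.sqrt_sq (by positivity)]
      _ < ε := by
          rw [mul_div_assoc'] ; rw [div_lt_iff₀ (by positivity)]
          nlinarith [Real.sqrt_nonneg (c * ‖P‖)]
  refine ⟨∑' j, a j, hsa.hasSum.tendsto_sum_nat, ?_⟩
  have hbd : ∀ N : ℕ, ‖∑ j ∈ Finset.range N, a j‖ ≤
      Real.sqrt (c * ‖P‖) * Real.sqrt (∑' j, t j) := by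
    intro N
    refine (key _).trans ?_
    exact mul_le_mul_of_nonneg_left
      (Real.sqrt_le_sqrt (Summable.sum_le_tsum _ (fun j _ => ht0 j) hsum_t)) (Real.sqrt_nonneg _)
  exact le_of_tendsto ((continuous_norm.tendsto _).comp hsa.hasSum.tendsto_sum_nat)
    (Eventually.of_forall hbd)
end

section
/- Let P ∈ 𝒮⁺(H) be such that ∑_{j=1}^∞ ⟨P C_j x, C_j x⟩ < ∞ for every x ∈ H. Then for every finite set J ⊂ ℕ and every x ∈ H one has |∑_{j∈J} D_j* P C_j x|_U² ≤ c‖P‖ · ∑_{j∈J} ⟨P C_j x, C_j x⟩. -/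
open scoped RealInnerProductSpace

/-- Cauchy–Schwarz for the semi-inner product induced by a positive self-adjoint operator. -/
lemma semi_cauchy_schwarz {H : Type*} [NormedAddCommGroup H] [InnerProductSpace ℝ H]
    [CompleteSpace H] (P : H →L[ℝ] H) (hPsa : IsSelfAdjoint P)
    (hPpos : ∀ x : H, 0 ≤ ⟪P x, x⟫) (a b : H) :
    ⟪P a, b⟫ ^ 2 ≤ ⟪P a, a⟫ * ⟪P b, b⟫ := by
  have hsymm := (ContinuousLinearMap.isSelfAdjoint_iff_isSymmetric.mp hPsa)
  have hba : ⟪P b, a⟫ = ⟪P a, b⟫ := (hsymm b a).trans (real_inner_comm _ _)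
  have h : ∀ t : ℝ, 0 ≤ ⟪P b, b⟫ * (t * t) + (2 * ⟪P a, b⟫) * t + ⟪P a, a⟫ := by
    intro t
    have := hPpos (a + t • b)
    have hexp : ⟪P (a + t • b), a + t • b⟫
        = ⟪P b, b⟫ * (t * t) + (2 * ⟪P a, b⟫) * t + ⟪P a, a⟫ := by
      rw [map_add, map_smul, inner_add_left, inner_add_right, inner_add_right,
        real_inner_smul_left, real_inner_smul_right, real_inner_smul_left,
        real_inner_smul_right, hba]
      ring
    linarith [hexp ▸ this]
  have hd := discrim_le_zero h
  rw [discrim] at hd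
  nlinarith [hd]

/-- If `P ∈ 𝒮⁺(H)` is such that `∑_j ⟨P C_j x, C_j x⟩ < ∞` for every `x ∈ H`,
then for every finite set `J ⊂ ℕ` and every `x ∈ H`,
`‖∑_{j∈J} D_j* P C_j x‖² ≤ c‖P‖ ∑_{j∈J} ⟨P C_j x, C_j x⟩`. -/
theorem stmt1
    {H U : Type*}
    [NormedAddCommGroup H] [InnerProductSpace ℝ H] [CompleteSpace H]
    [NormedAddCommGroup U] [InnerProductSpace ℝ U] [CompleteSpace U]
    (C : ℕ → H →L[ℝ] H) (D : ℕ → U →L[ℝ] H) (c : ℝ) (hc : 0 < c)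
    (hDsum : ∀ v : U, Summable fun j => ‖D j v‖ ^ 2)
    (hD : ∀ v : U, ∑' j, ‖D j v‖ ^ 2 ≤ c * ‖v‖ ^ 2)
    (P : H →L[ℝ] H) (hPsa : IsSelfAdjoint P)
    (hPpos : ∀ x : H, 0 ≤ ⟪P x, x⟫)
    (hPC : ∀ x : H, Summable fun j => ⟪P (C j x), C j x⟫) :
    ∀ (J : Finset ℕ) (x : H),
      ‖∑ j ∈ J, (ContinuousLinearMap.adjoint (D j)) (P (C j x))‖ ^ 2
        ≤ c * ‖P‖ * ∑ j ∈ J, ⟪P (C j x), C j x⟫ := by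
  intro J x
  set S : U := ∑ j ∈ J, (ContinuousLinearMap.adjoint (D j)) (P (C j x)) with hS
  set A : ℝ := ∑ j ∈ J, ⟪P (C j x), C j x⟫ with hA
  set B : ℝ := ∑ j ∈ J, ⟪P (D j S), D j S⟫ with hB
  have hAnn : 0 ≤ A := Finset.sum_nonneg fun j _ => hPpos _
  have hBnn : 0 ≤ B := Finset.sum_nonneg fun j _ => hPpos _
  -- ‖S‖² = ∑ ⟪P (C j x), D j S⟫
  have hrepr : ‖S‖ ^ 2 = ∑ j ∈ J, ⟪P (C j x), D j S⟫ := by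
    rw [← real_inner_self_eq_norm_sq, hS, sum_inner]
    refine Finset.sum_congr rfl fun j _ => ?_
    rw [ContinuousLinearMap.adjoint_inner_left]
  -- term-by-term Cauchy–Schwarz
  have hterm : ∀ j ∈ J, ⟪P (C j x), D j S⟫
      ≤ Real.sqrt (⟪P (C j x), C j x⟫ * ⟪P (D j S), D j S⟫) := by
    intro j _
    have h1 := semi_cauchy_schwarz P hPsa hPpos (C j x) (D j S)
    calc ⟪P (C j x), D j S⟫ ≤ |⟪P (C j x), D j S⟫| := le_abs_self _
      _ = Real.sqrt (⟪P (C j x), D j S⟫ ^ 2) := (Real.sqrt_sq_eq_abs _).symm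
      _ ≤ _ := Real.sqrt_le_sqrt h1
  -- finset Cauchy–Schwarz on square roots
  have hsumCS : (∑ j ∈ J, Real.sqrt (⟪P (C j x), C j x⟫ * ⟪P (D j S), D j S⟫)) ^ 2
      ≤ A * B := by
    refine Finset.sum_sq_le_sum_mul_sum_of_sq_eq_mul J
      (fun j _ => hPpos _) (fun j _ => hPpos _) fun j hj => ?_
    exact Real.sq_sqrt (mul_nonneg (hPpos _) (hPpos _))
  have hSle : ‖S‖ ^ 2 ≤ Real.sqrt (A * B) := by
    rw [hrepr]
    calc (∑ j ∈ J, ⟪P (C j x), D j S⟫)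
        ≤ ∑ j ∈ J, Real.sqrt (⟪P (C j x), C j x⟫ * ⟪P (D j S), D j S⟫) :=
          Finset.sum_le_sum hterm
      _ ≤ Real.sqrt (A * B) :=
          (Real.le_sqrt (Finset.sum_nonneg fun j _ => Real.sqrt_nonneg _) (mul_nonneg hAnn hBnn)).mpr hsumCS
  -- bound B
  have hBle : B ≤ ‖P‖ * (c * ‖S‖ ^ 2) := by
    have h1 : B ≤ ∑ j ∈ J, ‖P‖ * ‖D j S‖ ^ 2 := by
      refine Finset.sum_le_sum fun j _ => ?_
      calc ⟪P (D j S), D j S⟫ ≤ ‖P (D j S)‖ * ‖D j S‖ := real_inner_le_norm _ _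
        _ ≤ (‖P‖ * ‖D j S‖) * ‖D j S‖ := by
            gcongr; exact (P.le_opNorm _)
        _ = ‖P‖ * ‖D j S‖ ^ 2 := by ring
    rw [← Finset.mul_sum] at h1
    refine h1.trans ?_
    gcongr
    calc ∑ j ∈ J, ‖D j S‖ ^ 2 ≤ ∑' j, ‖D j S‖ ^ 2 :=
          Summable.sum_le_tsum J (fun j _ => sq_nonneg _) (hDsum S)
      _ ≤ c * ‖S‖ ^ 2 := hD S
  -- combine
  have hsq : (‖S‖ ^ 2) ^ 2 ≤ A * B := by
    calc (‖S‖ ^ 2) ^ 2 ≤ Real.sqrt (A * B) ^ 2 :=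
          pow_le_pow_left₀ (sq_nonneg _) hSle 2
      _ = A * B := Real.sq_sqrt (mul_nonneg hAnn hBnn)
  have hfinal : (‖S‖ ^ 2) ^ 2 ≤ (c * ‖P‖ * A) * ‖S‖ ^ 2 := by
    calc (‖S‖ ^ 2) ^ 2 ≤ A * B := hsq
      _ ≤ A * (‖P‖ * (c * ‖S‖ ^ 2)) := by gcongr
      _ = (c * ‖P‖ * A) * ‖S‖ ^ 2 := by ring
  rcases eq_or_lt_of_le (sq_nonneg ‖S‖) with h0 | h0
  · rw [← h0]
    exact mul_nonneg (mul_nonneg hc.le (norm_nonneg _)) hAnn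
  · exact le_of_mul_le_mul_right (by linarith [hfinal]) h0
end

section
/- Let (P^N)_{N∈ℕ} be a non-increasing sequence in 𝒮⁺(H) (P^{N+1} ≤ P^N for all N) converging strongly to P ∈ 𝒮⁺(H) (P^N x → P x for all x), and suppose ∑_{j=1}^∞ ⟨P^1 C_j x, C_j x⟩ < ∞ for every x ∈ H. Then for every x ∈ H, the vectors ∑_{j=1}^∞ D_j* P^N C_j x (each defined as the strong limit of partial sums) converge in U to ∑_{j=1}^∞ D_j* P C_j x as N → ∞. -/
open scoped RealInnerProductSpace
open Filter


lemma cs_pos_s6 {H : Type*} [NormedAddCommGroup H] [InnerProductSpace ℝ H] [CompleteSpace H]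
    (Q : H →L[ℝ] H) (hsa : IsSelfAdjoint Q) (hpos : ∀ y : H, 0 ≤ ⟪Q y, y⟫) (a b : H) :
    |⟪Q a, b⟫| ≤ Real.sqrt ⟪Q a, a⟫ * Real.sqrt ⟪Q b, b⟫ := by
  have hsym := hsa.isSymmetric
  have key : ⟪Q a, b⟫ ^ 2 ≤ ⟪Q a, a⟫ * ⟪Q b, b⟫ := by
    have h := discrim_le_zero (a := ⟪Q b, b⟫) (b := 2 * ⟪Q a, b⟫) (c := ⟪Q a, a⟫) ?_
    · rw [discrim] at h; nlinarith [h]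
    · intro t
      have h0 := hpos (a + t • b)
      have hba : ⟪Q b, a⟫ = ⟪Q a, b⟫ := (hsym b a).trans (real_inner_comm _ _)
      have e1 : ⟪Q (a + t • b), a + t • b⟫
          = ⟪Q b, b⟫ * (t * t) + 2 * ⟪Q a, b⟫ * t + ⟪Q a, a⟫ := by
        rw [map_add, map_smul, inner_add_left, inner_add_right, inner_add_right,
          real_inner_smul_left, real_inner_smul_left, real_inner_smul_right,
          real_inner_smul_right, hba]
        ring
      rw [e1] at h0; exact h0
  calc |⟪Q a, b⟫| = Real.sqrt (⟪Q a, b⟫ ^ 2) := (Real.sqrt_sq_eq_abs _).symm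
    _ ≤ Real.sqrt (⟪Q a, a⟫ * ⟪Q b, b⟫) := Real.sqrt_le_sqrt key
    _ = Real.sqrt ⟪Q a, a⟫ * Real.sqrt ⟪Q b, b⟫ := Real.sqrt_mul (hpos a) _

/-- If `(P^N)` is a non-increasing sequence in `𝒮⁺(H)` converging strongly to
`P ∈ 𝒮⁺(H)`, and `∑_j ⟨P^1 C_j x, C_j x⟩ < ∞` (the first element of the sequence), then for
every `x` the vectors `∑_j D_j* P^N C_j x` (strong limits of partial sums) converge in `U`
to `∑_j D_j* P C_j x` as `N → ∞`. -/
theorem stmt6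
    {H U : Type*}
    [NormedAddCommGroup H] [InnerProductSpace ℝ H] [CompleteSpace H]
    [NormedAddCommGroup U] [InnerProductSpace ℝ U] [CompleteSpace U]
    (C : ℕ → H →L[ℝ] H) (D : ℕ → U →L[ℝ] H) (c : ℝ) (hc : 0 < c)
    (hDsum : ∀ v : U, Summable fun j => ‖D j v‖ ^ 2)
    (hD : ∀ v : U, ∑' j, ‖D j v‖ ^ 2 ≤ c * ‖v‖ ^ 2)
    (P : ℕ → H →L[ℝ] H) (Pinf : H →L[ℝ] H)
    (hPsa : ∀ N, IsSelfAdjoint (P N)) (hPpos : ∀ N (x : H), 0 ≤ ⟪P N x, x⟫)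
    (hmono : ∀ N (x : H), ⟪P (N + 1) x, x⟫ ≤ ⟪P N x, x⟫)
    (hPinfsa : IsSelfAdjoint Pinf) (hPinfpos : ∀ x : H, 0 ≤ ⟪Pinf x, x⟫)
    (hstrong : ∀ x : H, Tendsto (fun N => P N x) atTop (nhds (Pinf x)))
    (hPC : ∀ x : H, Summable fun j => ⟪P 0 (C j x), C j x⟫) :
    ∀ (x : H) (S : ℕ → U) (L : U),
      (∀ N, Tendsto (fun M => ∑ j ∈ Finset.range M,
          (ContinuousLinearMap.adjoint (D j)) (P N (C j x))) atTop (nhds (S N))) →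
      Tendsto (fun M => ∑ j ∈ Finset.range M,
          (ContinuousLinearMap.adjoint (D j)) (Pinf (C j x))) atTop (nhds L) →
      Tendsto S atTop (nhds L) := by
  intro x S L hS hL
  set Q : ℕ → H →L[ℝ] H := fun N => P N - Pinf with hQdef
  have hQapp : ∀ N (y : H), Q N y = P N y - Pinf y := fun N y => rfl
  have hanti : ∀ y : H, Antitone (fun N => ⟪P N y, y⟫) :=
    fun y => antitone_nat_of_succ_le (fun n => hmono n y)
  have hQpos : ∀ N (y : H), 0 ≤ ⟪Q N y, y⟫ := by
    intro N y
    have hlim : Tendsto (fun n => ⟪P n y, y⟫) atTop (nhds ⟪Pinf y, y⟫) :=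
      (hstrong y).inner tendsto_const_nhds
    have h1 : ⟪Pinf y, y⟫ ≤ ⟪P N y, y⟫ :=
      le_of_tendsto hlim (eventually_atTop.2 ⟨N, fun n hn => hanti y hn⟩)
    rw [hQapp, inner_sub_left]; linarith
  have hQsa : ∀ N, IsSelfAdjoint (Q N) := fun N => (hPsa N).sub hPinfsa
  have hQle : ∀ N (y : H), ⟪Q N y, y⟫ ≤ ⟪P 0 y, y⟫ := by
    intro N y
    have h1 := hanti y (Nat.zero_le N)
    have h2 := hPinfpos y
    rw [hQapp, inner_sub_left]; linarith
  have hP0b : ∀ y : H, ⟪P 0 y, y⟫ ≤ ‖P 0‖ * ‖y‖ ^ 2 := by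
    intro y
    have h1 := real_inner_le_norm (P 0 y) y
    have h2 := (P 0).le_opNorm y
    nlinarith [norm_nonneg y, norm_nonneg (P 0 y)]
  set f : ℕ → ℕ → ℝ := fun N j => ⟪Q N (C j x), C j x⟫ with hfdef
  set g : ℕ → ℝ := fun j => ⟪P 0 (C j x), C j x⟫ with hgdef
  have hf0 : ∀ N j, 0 ≤ f N j := fun N j => hQpos N _
  have hfg : ∀ N j, f N j ≤ g j := fun N j => hQle N _
  have hfsum : ∀ N, Summable (f N) :=
    fun N => Summable.of_nonneg_of_le (hf0 N) (hfg N) (hPC x)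
  set ε : ℕ → ℝ := fun N => ∑' j, f N j with hεdef
  have hε0 : ∀ N, 0 ≤ ε N := fun N => tsum_nonneg (hf0 N)
  have hεlim : Tendsto ε atTop (nhds 0) := by
    have h := tendsto_tsum_of_dominated_convergence (𝓕 := atTop) (f := f) (g := fun _ => (0 : ℝ))
      (bound := g) (hPC x) ?_ ?_
    · simpa using h
    · intro j
      have h1 : Tendsto (fun N => P N (C j x) - Pinf (C j x)) atTop (nhds 0) := by
        simpa using (hstrong (C j x)).sub (tendsto_const_nhds (x := Pinf (C j x)))
      have h2 : Tendsto (fun N => (⟪P N (C j x) - Pinf (C j x), C j x⟫ : ℝ)) atTop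
          (nhds (⟪(0 : H), C j x⟫ : ℝ)) := h1.inner (tendsto_const_nhds (x := C j x))
      rw [inner_zero_left] at h2
      exact h2
    · exact Eventually.of_forall fun N j => by
        rw [Real.norm_eq_abs, abs_of_nonneg (hf0 N j)]; exact hfg N j
  set K : ℝ := ‖P 0‖ * c with hKdef
  have hK0 : 0 ≤ K := mul_nonneg (norm_nonneg _) hc.le
  have key : ∀ N M, ‖∑ j ∈ Finset.range M,
      (ContinuousLinearMap.adjoint (D j)) (Q N (C j x))‖ ≤ Real.sqrt (ε N) * Real.sqrt K := by
    intro N M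
    set w := ∑ j ∈ Finset.range M, (ContinuousLinearMap.adjoint (D j)) (Q N (C j x)) with hw
    have hbound : ∀ v : U, |⟪w, v⟫| ≤ Real.sqrt (ε N) * Real.sqrt K * ‖v‖ := by
      intro v
      have e1 : ⟪w, v⟫ = ∑ j ∈ Finset.range M, ⟪Q N (C j x), D j v⟫ := by
        rw [hw, sum_inner]
        exact Finset.sum_congr rfl fun j _ => ContinuousLinearMap.adjoint_inner_left _ _ _
      have h2 : |⟪w, v⟫| ≤ ∑ j ∈ Finset.range M,
          Real.sqrt ⟪Q N (C j x), C j x⟫ * Real.sqrt ⟪Q N (D j v), D j v⟫ := by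
        rw [e1]
        refine (Finset.abs_sum_le_sum_abs _ _).trans (Finset.sum_le_sum fun j _ => ?_)
        exact cs_pos_s6 (Q N) (hQsa N) (hQpos N) _ _
      have h3 : ∑ j ∈ Finset.range M,
          Real.sqrt ⟪Q N (C j x), C j x⟫ * Real.sqrt ⟪Q N (D j v), D j v⟫
          ≤ Real.sqrt (∑ j ∈ Finset.range M, ⟪Q N (C j x), C j x⟫) *
            Real.sqrt (∑ j ∈ Finset.range M, ⟪Q N (D j v), D j v⟫) :=
        Real.sum_sqrt_mul_sqrt_le _ (fun j => hQpos N _) (fun j => hQpos N _)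
      have h4 : ∑ j ∈ Finset.range M, ⟪Q N (C j x), C j x⟫ ≤ ε N :=
        Summable.sum_le_tsum _ (fun j _ => hf0 N j) (hfsum N)
      have h5 : ∑ j ∈ Finset.range M, ⟪Q N (D j v), D j v⟫ ≤ K * ‖v‖ ^ 2 := by
        have h51 : ∀ j, ⟪Q N (D j v), D j v⟫ ≤ ‖P 0‖ * ‖D j v‖ ^ 2 :=
          fun j => (hQle N _).trans (hP0b _)
        calc ∑ j ∈ Finset.range M, ⟪Q N (D j v), D j v⟫
            ≤ ∑ j ∈ Finset.range M, ‖P 0‖ * ‖D j v‖ ^ 2 :=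
              Finset.sum_le_sum fun j _ => h51 j
          _ = ‖P 0‖ * ∑ j ∈ Finset.range M, ‖D j v‖ ^ 2 := by rw [Finset.mul_sum]
          _ ≤ ‖P 0‖ * (c * ‖v‖ ^ 2) := by
              refine mul_le_mul_of_nonneg_left ?_ (norm_nonneg _)
              exact (Summable.sum_le_tsum _ (fun j _ => sq_nonneg _) (hDsum v)).trans (hD v)
          _ = K * ‖v‖ ^ 2 := by rw [hKdef]; ring
      have h6 : Real.sqrt (∑ j ∈ Finset.range M, ⟪Q N (C j x), C j x⟫) *
          Real.sqrt (∑ j ∈ Finset.range M, ⟪Q N (D j v), D j v⟫)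
          ≤ Real.sqrt (ε N) * Real.sqrt (K * ‖v‖ ^ 2) :=
        mul_le_mul (Real.sqrt_le_sqrt h4) (Real.sqrt_le_sqrt h5)
          (Real.sqrt_nonneg _) (Real.sqrt_nonneg _)
      have h7 : Real.sqrt (K * ‖v‖ ^ 2) = Real.sqrt K * ‖v‖ := by
        rw [Real.sqrt_mul hK0, Real.sqrt_sq (norm_nonneg v)]
      calc |⟪w, v⟫| ≤ _ := h2
        _ ≤ _ := h3
        _ ≤ Real.sqrt (ε N) * Real.sqrt (K * ‖v‖ ^ 2) := h6
        _ = Real.sqrt (ε N) * Real.sqrt K * ‖v‖ := by rw [h7]; ring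
    have hww := hbound w
    rw [real_inner_self_eq_norm_sq, abs_of_nonneg (sq_nonneg _)] at hww
    rcases eq_or_lt_of_le (norm_nonneg w) with h | h
    · rw [← h]; positivity
    · nlinarith [hww, h]
  have hnorm : ∀ N, ‖S N - L‖ ≤ Real.sqrt (ε N) * Real.sqrt K := by
    intro N
    have hw : Tendsto (fun M => ∑ j ∈ Finset.range M,
        (ContinuousLinearMap.adjoint (D j)) (Q N (C j x))) atTop (nhds (S N - L)) := by
      have h1 := (hS N).sub hL
      have h2 : (fun M => ∑ j ∈ Finset.range M,
          (ContinuousLinearMap.adjoint (D j)) (Q N (C j x)))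
          = fun M => (∑ j ∈ Finset.range M,
            (ContinuousLinearMap.adjoint (D j)) (P N (C j x)))
            - ∑ j ∈ Finset.range M, (ContinuousLinearMap.adjoint (D j)) (Pinf (C j x)) := by
        funext M
        rw [← Finset.sum_sub_distrib]
        exact Finset.sum_congr rfl fun j _ => by rw [hQapp, map_sub]
      rw [h2]; exact h1
    exact le_of_tendsto hw.norm (Eventually.of_forall fun M => key N M)
  have hB : Tendsto (fun N => Real.sqrt (ε N) * Real.sqrt K) atTop (nhds 0) := by
    have h1 : Tendsto (fun N => Real.sqrt (ε N)) atTop (nhds 0) := by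
      have := (Real.continuous_sqrt.tendsto 0).comp hεlim
      simpa [Function.comp_def] using this
    simpa using h1.mul_const (Real.sqrt K)
  rw [tendsto_iff_norm_sub_tendsto_zero]
  exact squeeze_zero (fun N => norm_nonneg _) hnorm hB
end
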